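/- For every k ≥ 0, the Catalan number Cat(2^k - 1) is odd. -/

import Mathlib

open Finset

lemma catalan_two_mul_add_one_zmod (m : ℕ) :
    ((catalan (2 * m + 1) : ZMod 2)) = (catalan m : ZMod 2) := by
  have h := catalan_succ' (2 * m)
  have hmem : (m, m) ∈ Finset.HasAntidiagonal.antidiagonal (2 * m) := by
    simp [Finset.HasAntidiagonal.mem_antidiagonal, two_mul]
  have hsplit : Finset.HasAntidiagonal.antidiagonal (2 * m) =
      insert (m, m) (Finset.HasAntidiagonal.antidiagonal (2 * m) \ {(m, m)}) := by
    rw [Finset.sdiff_singleton_eq_erase, Finset.insert_erase hmem]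
  have hrest : ∑ ij ∈ Finset.HasAntidiagonal.antidiagonal (2 * m) \ {(m, m)},
      ((catalan ij.1 * catalan ij.2 : ℕ) : ZMod 2) = 0 := by
    apply Finset.sum_involution (fun ij _ => (ij.2, ij.1))
    · intro a ha
      push_cast
      have h2 : (2 : ZMod 2) = 0 := rfl
      ring_nf
      rw [h2, mul_zero]
    · intro a ha _
      simp only [Finset.mem_sdiff, Finset.mem_singleton, Finset.HasAntidiagonal.mem_antidiagonal] at ha
      intro hswap
      apply ha.2
      have h1 : a.2 = a.1 := congrArg Prod.fst hswap
      have h2 : a.1 = m := by omega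
      have h3 : a.2 = m := by omega
      exact Prod.ext h2 h3
    · intro a ha
      simp only [Finset.mem_sdiff, Finset.mem_singleton, Finset.HasAntidiagonal.mem_antidiagonal] at ha ⊢
      refine ⟨by omega, fun hh => ha.2 ?_⟩
      have h1 : a.2 = m := congrArg Prod.fst hh
      have h2 : a.1 = m := congrArg Prod.snd hh
      exact Prod.ext h2 h1
    · intro a _
      rfl
  have sq : ∀ x : ZMod 2, x * x = x := by decide
  calc ((catalan (2 * m + 1) : ℕ) : ZMod 2)
      = ∑ ij ∈ Finset.HasAntidiagonal.antidiagonal (2 * m), ((catalan ij.1 * catalan ij.2 : ℕ) : ZMod 2) := by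
        rw [h]; push_cast; rfl
    _ = (catalan m : ZMod 2) := by
        rw [hsplit, Finset.sum_insert (by simp)]
        rw [hrest, add_zero]
        push_cast
        exact sq _

theorem stmt_7 : ∀ k : ℕ, Odd (catalan (2 ^ k - 1)) := by
  intro k
  rw [← ZMod.natCast_eq_one_iff_odd]
  induction k with
  | zero => simp
  | succ n ih =>
    have h2 : (2 : ℕ) ^ (n + 1) - 1 = 2 * (2 ^ n - 1) + 1 := by
      have : 1 ≤ 2 ^ n := Nat.one_le_two_pow
      omega
    rw [h2, catalan_two_mul_add_one_zmod, ih]
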